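/- Let C be a noetherian EI category, J a Grothendieck topology on C^op, O a structure presheaf, and D the full subcategory of J-irreducible objects (objects x with J(x) = {C(x,−)}). Then an O-module V is J-torsion (i.e., every element of every V_x is annihilated by some covering sieve) if and only if V_x = 0 for every object x of D. -/

import Mathlib

open CategoryTheory Opposite

universe u

/-- The sieve of morphisms annihilating an element `v` of a presheaf of modules. -/
def annSieve {C : Type u} [SmallCategory C] {R : Cᵒᵖ ⥤ RingCat.{u}}
    (M : PresheafOfModules.{u} R) {x : C} (v : M.obj (op x)) : Sieve x where
  arrows y f := M.map f.op v = 0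
  downward_closed := by
    intro y z f hf g
    change M.map (f.op ≫ g.op) v = 0
    rw [show (f.op ≫ g.op : op x ⟶ op z) = (g ≫ f).op from rfl]
    simp only [op_comp, PresheafOfModules.map_comp_apply]
    rw [show M.map f.op v = 0 from hf]; exact (M.map g.op).hom.map_zero

/-- Let `C` be a noetherian EI directed category (Lean convention: the Lean category `C`
is the opposite of the paper's category, so Mathlib's sieves correspond to the paper's
sieves on `C^op`, and a presheaf of modules on `C` is a covariant functor on the paper's
category), `J` a Grothendieck topology, `R` a structure presheaf of rings, and `M` a
presheaf of `R`-modules.  Then `M` is `J`-torsion — every element of every `M.obj (op x)`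
is annihilated by some covering sieve — if and only if `M.obj (op x) = 0` for every
`J`-irreducible object `x`, i.e. every `x` with `J x = {⊤}`. -/
theorem torsion_iff_vanishes_on_irreducibles
    {C : Type u} [SmallCategory C]
    (hdir : ∀ x y : C, Nonempty (x ⟶ y) → Nonempty (y ⟶ x) → x = y)
    (hnoeth : WellFounded (fun a b : C => Nonempty (a ⟶ b) ∧ a ≠ b))
    (hEI : ∀ (x : C) (f : x ⟶ x), IsIso f)
    (J : GrothendieckTopology C) {R : Cᵒᵖ ⥤ RingCat.{u}}
    (M : PresheafOfModules.{u} R) :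
    (∀ (x : C) (v : M.obj (op x)), ∃ S ∈ J x,
        ∀ ⦃y : C⦄ (f : y ⟶ x), S.arrows f → M.map f.op v = 0) ↔
    (∀ x : C, J.sieves x = {⊤} → ∀ v : M.obj (op x), v = 0) := by
  constructor
  · intro h x hx v
    obtain ⟨S, hS, hann⟩ := h x v
    have hStop : S = ⊤ := by
      have : S ∈ ({⊤} : Set (Sieve x)) := by rw [← hx]; exact hS
      simpa using this
    have := hann (𝟙 x) (by simp [hStop])
    simp at this; exact this
  · intro h x v
    suffices key : ∀ x : C, ∀ v : M.obj (op x), annSieve M v ∈ J x by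
      exact ⟨annSieve M v, key x v, fun y f hf => hf⟩
    intro x
    induction x using hnoeth.induction with
    | _ x ih =>
      intro v
      by_cases hx : J.sieves x = {⊤}
      · have : v = 0 := h x hx v
        have : annSieve M v = ⊤ := by
          ext y f
          simp [annSieve, this]
        rw [this]
        exact J.top_mem x
      · -- there is a covering sieve T ≠ ⊤
        have : ∃ T ∈ J x, T ≠ ⊤ := by
          by_contra hcon
          push_neg at hcon
          apply hx
          ext T
          simp only [Set.mem_singleton_iff]
          constructor
          · intro hT; exact hcon T hT
          · rintro rfl; exact J.top_mem x
        obtain ⟨T, hT, hTne⟩ := this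
        -- use transitivity
        apply J.transitive hT
        intro y f hf
        have hyx : y ≠ x := by
          rintro rfl
          apply hTne
          have : IsIso f := hEI y f
          ext z g
          simp only [Sieve.top_apply, iff_true]
          have : T.arrows ((g ≫ inv f) ≫ f) := T.downward_closed hf (g ≫ inv f)
          simpa using this
        have hcov := ih y ⟨⟨f⟩, hyx⟩ (M.map f.op v)
        convert hcov using 1
        ext z g
        show M.map ((g ≫ f).op) v = 0 ↔ M.map g.op (M.map f.op v) = 0
        rw [op_comp, PresheafOfModules.map_comp_apply]
        exact Iff.rfl
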